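/- Let U be a bounded open convex subset of ℝ^d. A sequence of convex functions s_n : U → ℝ converges uniformly to a convex function s : U → ℝ if and only if their Legendre–Fenchel conjugates s_n* : ℝ^d → ℝ converge uniformly to a convex function f : ℝ^d → ℝ. -/

import Mathlib

open Filter
open scoped RealInnerProductSpace

noncomputable section

/-- The Legendre–Fenchel conjugate of a real-valued function on a set `U ⊆ ℝ^d`:
`s*(y) = sup_{x ∈ U} (⟪x,y⟫ - s x)`. -/
def fenchelConjOn {d : ℕ} (U : Set (EuclideanSpace ℝ (Fin d)))
    (s : EuclideanSpace ℝ (Fin d) → ℝ) (y : EuclideanSpace ℝ (Fin d)) : ℝ :=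
  sSup ((fun x => (inner ℝ x y : ℝ) - s x) '' U)

/-- Existence of a subgradient of a convex function at a point of an open set. -/
lemma exists_subgrad {d : ℕ} {U : Set (EuclideanSpace ℝ (Fin d))} (hUo : IsOpen U)
    {s : EuclideanSpace ℝ (Fin d) → ℝ} (hs : ConvexOn ℝ U s) {x : EuclideanSpace ℝ (Fin d)}
    (hx : x ∈ U) : ∃ y, ∀ z ∈ U, s x + ⟪z - x, y⟫ ≤ s z := by
  classical
  set S : Set (EuclideanSpace ℝ (Fin d) × ℝ) :=
    (U ×ˢ Set.univ) ∩ (fun p : EuclideanSpace ℝ (Fin d) × ℝ => s p.1 - p.2) ⁻¹' Set.Iio 0 with hS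
  have hSopen : IsOpen S := by
    apply ContinuousOn.isOpen_inter_preimage _ (hUo.prod isOpen_univ) isOpen_Iio
    exact ((hs.continuousOn hUo).comp continuous_fst.continuousOn
      (fun p hp => hp.1)).sub continuous_snd.continuousOn
  have hmem : ∀ p : EuclideanSpace ℝ (Fin d) × ℝ, p ∈ S ↔ p.1 ∈ U ∧ s p.1 < p.2 := by
    intro p; simp [hS, sub_neg]
  have hSconv : Convex ℝ S := by
    intro p hp q hq a b ha hb hab
    rw [hmem] at hp hq ⊢
    refine ⟨hs.1 hp.1 hq.1 ha hb hab, ?_⟩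
    calc s (a • p + b • q).1 = s (a • p.1 + b • q.1) := rfl
    _ ≤ a * s p.1 + b * s q.1 := hs.2 hp.1 hq.1 ha hb hab
    _ < a * p.2 + b * q.2 := by
        rcases eq_or_lt_of_le ha with rfl | ha'
        · simp only [zero_mul, zero_add]
          exact mul_lt_mul_of_pos_left hq.2 (by linarith)
        rcases eq_or_lt_of_le hb with rfl | hb'
        · simp only [zero_mul, add_zero]
          exact mul_lt_mul_of_pos_left hp.2 (by linarith)
        · have h1 := mul_lt_mul_of_pos_left hp.2 ha'
          have h2 := mul_lt_mul_of_pos_left hq.2 hb'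
          linarith
  have hxS : (x, s x) ∉ S := by rw [hmem]; simp
  obtain ⟨φ, hφ⟩ := geometric_hahn_banach_open_point hSconv hSopen hxS
  set a : ℝ := φ (0, 1) with ha
  have hφsplit : ∀ (z : EuclideanSpace ℝ (Fin d)) (t : ℝ), φ (z, t) = φ (z, 0) + t * a := by
    intro z t
    have h : (z, t) = (z, (0:ℝ)) + t • ((0 : EuclideanSpace ℝ (Fin d)), (1:ℝ)) := by
      simp [Prod.ext_iff]
    rw [h, map_add, map_smul, smul_eq_mul]
  have key : ∀ z ∈ U, ∀ t, s z < t → φ (z, 0) + t * a < φ (x, 0) + s x * a := by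
    intro z hz t ht
    have h := hφ (z, t) ((hmem _).2 ⟨hz, ht⟩)
    rw [hφsplit z t, hφsplit x (s x)] at h
    exact h
  have haneg : a < 0 := by
    have := key x hx (s x + 1) (by linarith)
    nlinarith
  have key2 : ∀ z ∈ U, φ (z, 0) + s z * a ≤ φ (x, 0) + s x * a := by
    intro z hz
    refine le_of_forall_pos_le_add fun δ hδ => ?_
    have hpos : 0 < δ / (-a) := div_pos hδ (by linarith)
    have hk := key z hz (s z + δ / (-a)) (by linarith)
    have ha2 : δ / (-a) * a = -δ := by
      rw [div_mul_eq_mul_div, mul_div_assoc, div_neg, div_self haneg.ne, mul_neg, mul_one]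
    nlinarith
  set g : EuclideanSpace ℝ (Fin d) →L[ℝ] ℝ :=
    (-a)⁻¹ • (φ.comp (ContinuousLinearMap.inl ℝ (EuclideanSpace ℝ (Fin d)) ℝ)) with hg
  refine ⟨(InnerProductSpace.toDual ℝ (EuclideanSpace ℝ (Fin d))).symm g, fun z hz => ?_⟩
  have hgz : ∀ w, ⟪w, (InnerProductSpace.toDual ℝ (EuclideanSpace ℝ (Fin d))).symm g⟫ = g w := by
    intro w
    rw [real_inner_comm]
    exact InnerProductSpace.toDual_symm_apply
  rw [hgz]
  have hval : g (z - x) = (-a)⁻¹ * (φ (z, 0) - φ (x, 0)) := by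
    have hp : ((z - x : EuclideanSpace ℝ (Fin d)), (0:ℝ)) = ((z, (0:ℝ)) - (x, 0)) := by
      rw [Prod.mk_sub_mk, sub_zero]
    rw [hg]
    simp only [ContinuousLinearMap.smul_apply, ContinuousLinearMap.coe_comp', Function.comp_apply,
      ContinuousLinearMap.inl_apply, smul_eq_mul]
    rw [hp, map_sub]
  have h2 := key2 z hz
  have hna : 0 < -a := by linarith
  rw [hval]
  have h1 : φ (z, 0) - φ (x, 0) ≤ (s x - s z) * a := by linarith
  have h3 : (-a)⁻¹ * (φ (z, 0) - φ (x, 0)) ≤ (-a)⁻¹ * ((s x - s z) * a) :=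
    mul_le_mul_of_nonneg_left h1 (by positivity)
  have h4 : (-a)⁻¹ * ((s x - s z) * a) = s z - s x := by
    rw [mul_comm (s x - s z) a, ← mul_assoc, inv_neg, neg_mul, inv_mul_cancel₀ haneg.ne]; ring
  linarith

/-- The set defining the Fenchel conjugate of a convex function on a bounded open set is
bounded above. -/
lemma conj_bddAbove {d : ℕ} {U : Set (EuclideanSpace ℝ (Fin d))} (hUb : Bornology.IsBounded U)
    (hUo : IsOpen U) {s : EuclideanSpace ℝ (Fin d) → ℝ} (hs : ConvexOn ℝ U s) (hUne : U.Nonempty)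
    (y : EuclideanSpace ℝ (Fin d)) :
    BddAbove ((fun x => (inner ℝ x y : ℝ) - s x) '' U) := by
  obtain ⟨x₀, hx₀⟩ := hUne
  obtain ⟨w, hw⟩ := exists_subgrad hUo hs hx₀
  obtain ⟨R, hR⟩ := isBounded_iff_forall_norm_le.1 hUb
  refine ⟨R * ‖y - w‖ + (⟪x₀, w⟫ - s x₀), ?_⟩
  rintro _ ⟨z, hz, rfl⟩
  have h1 := hw z hz
  have h2 : ⟪z - x₀, w⟫ = ⟪z, w⟫ - ⟪x₀, w⟫ := inner_sub_left z x₀ w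
  have h3 : ⟪z, y - w⟫ = ⟪z, y⟫ - ⟪z, w⟫ := inner_sub_right z y w
  have h4 : ⟪z, y - w⟫ ≤ R * ‖y - w‖ :=
    (real_inner_le_norm z (y - w)).trans
      (mul_le_mul_of_nonneg_right (hR z hz) (norm_nonneg _))
  simp only []
  linarith

/-- Fenchel–Young inequality. -/
lemma conj_young {d : ℕ} {U : Set (EuclideanSpace ℝ (Fin d))} (hUb : Bornology.IsBounded U)
    (hUo : IsOpen U) {s : EuclideanSpace ℝ (Fin d) → ℝ} (hs : ConvexOn ℝ U s) (hUne : U.Nonempty)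
    {x : EuclideanSpace ℝ (Fin d)} (hx : x ∈ U) (y : EuclideanSpace ℝ (Fin d)) :
    ⟪y, x⟫ - fenchelConjOn U s y ≤ s x := by
  have h1 : ⟪x, y⟫ - s x ≤ fenchelConjOn U s y :=
    le_csSup (conj_bddAbove hUb hUo hs hUne y) ⟨x, hx, rfl⟩
  rw [real_inner_comm]
  linarith

/-- The biconjugate of a convex function on a bounded open convex set agrees with the function. -/
lemma biconj_eq {d : ℕ} {U : Set (EuclideanSpace ℝ (Fin d))} (hUb : Bornology.IsBounded U)
    (hUo : IsOpen U) (hUne : U.Nonempty) {s : EuclideanSpace ℝ (Fin d) → ℝ}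
    (hs : ConvexOn ℝ U s) {x : EuclideanSpace ℝ (Fin d)} (hx : x ∈ U) :
    sSup ((fun y => ⟪y, x⟫ - fenchelConjOn U s y) '' Set.univ) = s x := by
  have hbdd : BddAbove ((fun y => ⟪y, x⟫ - fenchelConjOn U s y) '' Set.univ) :=
    ⟨s x, by rintro _ ⟨y, -, rfl⟩; exact conj_young hUb hUo hs hUne hx y⟩
  apply le_antisymm
  · exact csSup_le (Set.univ_nonempty.image _)
      (by rintro _ ⟨y, -, rfl⟩; exact conj_young hUb hUo hs hUne hx y)
  · obtain ⟨y₀, hy₀⟩ := exists_subgrad hUo hs hx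
    have hc : fenchelConjOn U s y₀ ≤ ⟪x, y₀⟫ - s x := by
      refine csSup_le (hUne.image _) ?_
      rintro _ ⟨z, hz, rfl⟩
      have h1 := hy₀ z hz
      have h2 : ⟪z - x, y₀⟫ = ⟪z, y₀⟫ - ⟪x, y₀⟫ := inner_sub_left z x y₀
      simp only []
      linarith
    have h3 : s x ≤ ⟪y₀, x⟫ - fenchelConjOn U s y₀ := by
      rw [real_inner_comm]; linarith
    exact h3.trans (le_csSup hbdd ⟨y₀, Set.mem_univ _, rfl⟩)

/-- Generic comparison of suprema. -/
lemma sSup_image_le_add {α : Type*} {A B : α → ℝ} {S : Set α} (hS : S.Nonempty)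
    (hB : BddAbove (B '' S)) {ε : ℝ} (h : ∀ a ∈ S, A a ≤ B a + ε) :
    sSup (A '' S) ≤ sSup (B '' S) + ε := by
  refine csSup_le (hS.image _) ?_
  rintro _ ⟨a, ha, rfl⟩
  exact (h a ha).trans (add_le_add (le_csSup hB (Set.mem_image_of_mem _ ha)) le_rfl)

/-- A supremum of affine functions is convex. -/
lemma convexOn_sSup_image {d : ℕ} {α : Type*} {S : Set α} (hS : S.Nonempty)
    {V : Set (EuclideanSpace ℝ (Fin d))} (hV : Convex ℝ V)
    (F : α → EuclideanSpace ℝ (Fin d) → ℝ)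
    (hbdd : ∀ x ∈ V, BddAbove ((fun a => F a x) '' S))
    (haff : ∀ a ∈ S, ∀ (x₁ x₂ : EuclideanSpace ℝ (Fin d)), ∀ p q : ℝ, 0 ≤ p → 0 ≤ q → p + q = 1 →
      F a (p • x₁ + q • x₂) = p * F a x₁ + q * F a x₂) :
    ConvexOn ℝ V (fun x => sSup ((fun a => F a x) '' S)) := by
  refine ⟨hV, fun x₁ hx₁ x₂ hx₂ p q hp hq hpq => ?_⟩
  refine csSup_le (hS.image _) ?_
  rintro _ ⟨a, ha, rfl⟩
  simp only [smul_eq_mul]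
  calc F a (p • x₁ + q • x₂) = p * F a x₁ + q * F a x₂ := haff a ha x₁ x₂ p q hp hq hpq
  _ ≤ p * sSup ((fun a => F a x₁) '' S) + q * sSup ((fun a => F a x₂) '' S) :=
      add_le_add (mul_le_mul_of_nonneg_left (le_csSup (hbdd x₁ hx₁) ⟨a, ha, rfl⟩) hp)
        (mul_le_mul_of_nonneg_left (le_csSup (hbdd x₂ hx₂) ⟨a, ha, rfl⟩) hq)

/-- Let `U` be a bounded open convex subset of `ℝ^d`. A sequence of convex
functions `s_n : U → ℝ` converges uniformly on `U` to a convex function `s : U → ℝ` if and only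
if their Legendre–Fenchel conjugates `s_n* : ℝ^d → ℝ` converge uniformly on `ℝ^d` to a convex
function `f : ℝ^d → ℝ`. -/
theorem uniform_convergence_iff_conjugates_uniformly_converge {d : ℕ}
    (U : Set (EuclideanSpace ℝ (Fin d)))
    (hUb : Bornology.IsBounded U) (hUo : IsOpen U) (hUc : Convex ℝ U) (hUne : U.Nonempty)
    (sn : ℕ → EuclideanSpace ℝ (Fin d) → ℝ)
    (hsn : ∀ n, ConvexOn ℝ U (sn n)) :
    (∃ s : EuclideanSpace ℝ (Fin d) → ℝ, ConvexOn ℝ U s ∧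
        TendstoUniformlyOn sn s atTop U) ↔
    (∃ f : EuclideanSpace ℝ (Fin d) → ℝ, ConvexOn ℝ Set.univ f ∧
        TendstoUniformly (fun n => fenchelConjOn U (sn n)) f atTop) := by
  constructor
  · rintro ⟨s, hsc, hconv⟩
    refine ⟨fenchelConjOn U s, ?_, ?_⟩
    · exact convexOn_sSup_image hUne convex_univ (fun x y => (inner ℝ x y : ℝ) - s x)
        (fun y _ => conj_bddAbove hUb hUo hsc hUne y)
        (fun x _ y₁ y₂ p q hp hq hpq => by
          simp only [inner_add_right, real_inner_smul_right]
          linear_combination s x * hpq)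
    · rw [Metric.tendstoUniformly_iff]
      intro ε hε
      have h2 := (Metric.tendstoUniformlyOn_iff.1 hconv) (ε/2) (by linarith)
      filter_upwards [h2] with n hn y
      have hb : ∀ x ∈ U, sn n x ≤ s x + ε/2 ∧ s x ≤ sn n x + ε/2 := by
        intro x hx
        have hd := hn x hx
        rw [Real.dist_eq] at hd
        have := abs_lt.1 hd
        constructor <;> linarith [this.1, this.2]
      have e1 : fenchelConjOn U (sn n) y ≤ fenchelConjOn U s y + ε/2 :=
        sSup_image_le_add hUne (conj_bddAbove hUb hUo hsc hUne y)
          (fun x hx => by have := (hb x hx).2; linarith)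
      have e2 : fenchelConjOn U s y ≤ fenchelConjOn U (sn n) y + ε/2 :=
        sSup_image_le_add hUne (conj_bddAbove hUb hUo (hsn n) hUne y)
          (fun x hx => by have := (hb x hx).1; linarith)
      rw [Real.dist_eq, abs_sub_lt_iff]
      constructor <;> linarith
  · rintro ⟨f, hfc, hconv⟩
    obtain ⟨N, hN⟩ := ((Metric.tendstoUniformly_iff.1 hconv) 1 one_pos).exists
    have hbddf : ∀ x ∈ U, BddAbove ((fun y => ⟪y, x⟫ - f y) '' Set.univ) := by
      intro x hx
      refine ⟨sn N x + 1, ?_⟩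
      rintro _ ⟨y, -, rfl⟩
      have hd := hN y
      rw [Real.dist_eq] at hd
      have hd2 := abs_lt.1 hd
      have hFY := conj_young hUb hUo (hsn N) hUne hx y
      simp only []
      linarith [hd2.1, hd2.2]
    refine ⟨fun x => sSup ((fun y => ⟪y, x⟫ - f y) '' Set.univ), ?_, ?_⟩
    · exact convexOn_sSup_image Set.univ_nonempty hUc (fun y x => ⟪y, x⟫ - f y) hbddf
        (fun y _ x₁ x₂ p q hp hq hpq => by
          simp only [inner_add_right, real_inner_smul_right]
          linear_combination f y * hpq)
    · rw [Metric.tendstoUniformlyOn_iff]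
      intro ε hε
      have h2 := (Metric.tendstoUniformly_iff.1 hconv) (ε/2) (by linarith)
      filter_upwards [h2] with n hn x hx
      have hbi := biconj_eq hUb hUo hUne (hsn n) hx
      have hbdd2 : BddAbove ((fun y => ⟪y, x⟫ - fenchelConjOn U (sn n) y) '' Set.univ) :=
        ⟨sn n x, by rintro _ ⟨y, -, rfl⟩; exact conj_young hUb hUo (hsn n) hUne hx y⟩
      have hfb : ∀ y, f y ≤ fenchelConjOn U (sn n) y + ε/2 ∧
          fenchelConjOn U (sn n) y ≤ f y + ε/2 := by
        intro y
        have hd := hn y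
        rw [Real.dist_eq] at hd
        have := abs_lt.1 hd
        constructor <;> linarith [this.1, this.2]
      have e1 : sSup ((fun y => ⟪y, x⟫ - f y) '' Set.univ) ≤
          sSup ((fun y => ⟪y, x⟫ - fenchelConjOn U (sn n) y) '' Set.univ) + ε/2 :=
        sSup_image_le_add Set.univ_nonempty hbdd2
          (fun y _ => by have := (hfb y).2; linarith)
      have e2 : sSup ((fun y => ⟪y, x⟫ - fenchelConjOn U (sn n) y) '' Set.univ) ≤
          sSup ((fun y => ⟪y, x⟫ - f y) '' Set.univ) + ε/2 :=
        sSup_image_le_add Set.univ_nonempty (hbddf x hx)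
          (fun y _ => by have := (hfb y).1; linarith)
      rw [Real.dist_eq, abs_sub_lt_iff]
      rw [hbi] at e1 e2
      constructor <;> linarith
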